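/- Let W be a symmetric n×n real matrix with nonnegative entries and zero diagonal with n ≥ 2, let L = D − W be its Laplacian matrix, where D = Diag(W·1), and let t > 0. Then the regularized Laplacian kernel K = (I + tL)^{-1} is a 1-proximity on {1,…,n}: K_xy + K_xz − K_yz ≤ K_xx for all x, y, z, with strict inequality whenever z = y and y ≠ x, and ∑_y K_xy = 1 for every x. Moreover, K is positive definite. -/

import Mathlib

open Finset Matrix

section
variable {n : ℕ} (W : Matrix (Fin n) (Fin n) ℝ) (L : Matrix (Fin n) (Fin n) ℝ)

private lemma laplacian_mulVec
    (hL : L = Matrix.diagonal (fun i => ∑ j : Fin n, W i j) - W)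
    (v : Fin n → ℝ) (i : Fin n) :
    (L *ᵥ v) i = ∑ j : Fin n, W i j * (v i - v j) := by
  subst hL
  simp only [Matrix.mulVec, dotProduct, Matrix.sub_apply, Matrix.diagonal_apply,
    sub_mul, ite_mul, zero_mul, Finset.sum_sub_distrib, Finset.sum_ite_eq,
    Finset.mem_univ, if_true, Finset.sum_mul]
  rw [← Finset.sum_sub_distrib]
  exact Finset.sum_congr rfl fun j _ => by ring

private lemma laplacian_qf
    (hL : L = Matrix.diagonal (fun i => ∑ j : Fin n, W i j) - W)
    (v : Fin n → ℝ) :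
    v ⬝ᵥ L *ᵥ v = ∑ i : Fin n, ∑ j : Fin n, W i j * (v i * (v i - v j)) := by
  rw [dotProduct]
  refine Finset.sum_congr rfl fun i _ => ?_
  rw [laplacian_mulVec W L hL v i, Finset.mul_sum]
  exact Finset.sum_congr rfl fun j _ => by ring

private lemma laplacian_qf_nonneg
    (hW_symm : W.IsSymm) (hW_nonneg : ∀ i j : Fin n, 0 ≤ W i j)
    (hL : L = Matrix.diagonal (fun i => ∑ j : Fin n, W i j) - W)
    (v : Fin n → ℝ) :
    0 ≤ v ⬝ᵥ L *ᵥ v := by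
  have h1 := laplacian_qf W L hL v
  have hsym : ∀ i j, W j i = W i j := fun i j => by
    conv_lhs => rw [← hW_symm, Matrix.transpose_apply]
  have h2 : v ⬝ᵥ L *ᵥ v = ∑ i : Fin n, ∑ j : Fin n, W i j * (v j * (v j - v i)) := by
    rw [h1, Finset.sum_comm]
    exact Finset.sum_congr rfl fun i _ => Finset.sum_congr rfl fun j _ => by rw [hsym i j]
  have h3 : 2 * (v ⬝ᵥ L *ᵥ v) = ∑ i : Fin n, ∑ j : Fin n, W i j * (v i - v j)^2 := by
    rw [two_mul]; nth_rewrite 1 [h1]; rw [h2, ← Finset.sum_add_distrib]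
    refine Finset.sum_congr rfl fun i _ => ?_
    rw [← Finset.sum_add_distrib]
    exact Finset.sum_congr rfl fun j _ => by ring
  nlinarith [Finset.sum_nonneg (fun i (_ : i ∈ Finset.univ) =>
    Finset.sum_nonneg (fun j (_ : j ∈ (Finset.univ : Finset (Fin n))) =>
      mul_nonneg (hW_nonneg i j) (sq_nonneg (v i - v j)))) , h3]

end

/-- Let `W` be a symmetric `n × n` real matrix (`n ≥ 2`) with nonnegative
entries and zero diagonal, `L = D − W` its Laplacian with `D = Diag(W·1)`, and `t > 0`.
Then the regularized Laplacian kernel `K = (I + tL)⁻¹` is a `1`-proximity on `{1,…,n}`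
(triangle inequality for proximities, strict when `z = y ≠ x`, rows summing to `1`),
and `K` is positive definite. -/
theorem regularized_laplacian_one_proximity {n : ℕ} (hn : 2 ≤ n)
    (W : Matrix (Fin n) (Fin n) ℝ)
    (hW_symm : W.IsSymm) (hW_nonneg : ∀ i j : Fin n, 0 ≤ W i j)
    (hW_diag : ∀ i : Fin n, W i i = 0)
    (L : Matrix (Fin n) (Fin n) ℝ)
    (hL : L = Matrix.diagonal (fun i => ∑ j : Fin n, W i j) - W)
    (t : ℝ) (ht : 0 < t)
    (K : Matrix (Fin n) (Fin n) ℝ) (hK : K = (1 + t • L)⁻¹) :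
    (∀ x y z : Fin n, K x y + K x z - K y z ≤ K x x) ∧
    (∀ x y : Fin n, y ≠ x → K x y + K x y - K y y < K x x) ∧
    (∀ x : Fin n, ∑ y : Fin n, K x y = 1) ∧
    K.PosDef := by
  set M : Matrix (Fin n) (Fin n) ℝ := 1 + t • L with hM
  -- L is symmetric
  have hLsymm : ∀ i j, L i j = L j i := by
    intro i j
    have hsym : W j i = W i j := by conv_lhs => rw [← hW_symm, Matrix.transpose_apply]
    by_cases h : i = j
    · subst h; rfl
    · simp [hL, Matrix.diagonal_apply, h, Ne.symm h, hsym]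
  -- M *ᵥ v pointwise
  have hMv : ∀ (v : Fin n → ℝ) (i : Fin n), (M *ᵥ v) i = v i + t * (L *ᵥ v) i := by
    intro v i
    simp [hM, Matrix.add_mulVec, Matrix.smul_mulVec, Matrix.one_mulVec]
  -- M is positive definite
  have hMpd : M.PosDef := by
    refine Matrix.PosDef.of_dotProduct_mulVec_pos ?_ ?_
    · rw [Matrix.IsHermitian]
      ext i j
      simp only [Matrix.conjTranspose_apply, star_trivial, Matrix.add_apply, hM,
        Matrix.one_apply, Matrix.smul_apply, smul_eq_mul]
      rw [hLsymm j i]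
      by_cases h : i = j <;> simp [h, Ne.symm, eq_comm]
    · intro v hv
      have hq := laplacian_qf_nonneg W L hW_symm hW_nonneg hL v
      have hvv : 0 < v ⬝ᵥ v := by
        have : v ⬝ᵥ v = ∑ i, (v i)^2 := by
          simp [dotProduct, sq]
        rw [this]
        rcases Function.ne_iff.mp hv with ⟨i, hi⟩
        exact Finset.sum_pos' (fun j _ => sq_nonneg _)
          ⟨i, Finset.mem_univ i, by
            calc (0:ℝ) < |v i|^2 := pow_pos (abs_pos.mpr hi) 2
            _ = (v i)^2 := sq_abs _⟩
      have : v ⬝ᵥ M *ᵥ v = v ⬝ᵥ v + t * (v ⬝ᵥ L *ᵥ v) := by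
        simp only [dotProduct]
        rw [Finset.mul_sum, ← Finset.sum_add_distrib]
        exact Finset.sum_congr rfl fun i _ => by rw [hMv v i]; ring
      simp only [star_trivial]
      rw [this]
      nlinarith
  have hKpd : K.PosDef := hK ▸ hMpd.inv
  have hdet : IsUnit M.det := (Matrix.isUnit_iff_isUnit_det M).mp hMpd.isUnit
  have hKM : K * M = 1 := by rw [hK]; exact Matrix.nonsing_inv_mul M hdet
  have hMK : M * K = 1 := by rw [hK]; exact Matrix.mul_nonsing_inv M hdet
  -- K is symmetric
  have hKsymm : ∀ i j, K i j = K j i := by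
    intro i j
    have := hKpd.isHermitian
    conv_lhs => rw [← this, Matrix.conjTranspose_apply, star_trivial]
  -- rows of M sum to 1 : M *ᵥ 1 = 1
  have hM1 : M *ᵥ (fun _ => (1:ℝ)) = fun _ => (1:ℝ) := by
    funext i
    rw [hMv]
    rw [laplacian_mulVec W L hL]
    simp
  -- rows of K sum to 1
  have hK1 : K *ᵥ (fun _ => (1:ℝ)) = fun _ => (1:ℝ) := by
    have : K *ᵥ (M *ᵥ (fun _ => (1:ℝ))) = fun _ => (1:ℝ) := by
      rw [Matrix.mulVec_mulVec, hKM, Matrix.one_mulVec]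
    rwa [hM1] at this
  have hrow : ∀ x : Fin n, ∑ y : Fin n, K x y = 1 := by
    intro x
    have := congrFun hK1 x
    simpa [Matrix.mulVec, dotProduct] using this
  -- the key maximum-principle lemma
  have hmain : ∀ x y : Fin n, x ≠ y → ∀ z, K z x - K z y ≤ K x x - K x y := by
    intro x y hxy z
    set u : Fin n → ℝ := fun j => K j x - K j y with hu
    set w : Fin n → ℝ := fun j => (if j = x then (1:ℝ) else 0) - (if j = y then 1 else 0) with hw
    have huw : u = K *ᵥ w := by
      funext j
      simp only [hu, hw, Matrix.mulVec, dotProduct, mul_sub, mul_ite, mul_one, mul_zero,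
        Finset.sum_sub_distrib, Finset.sum_ite_eq', Finset.mem_univ, if_true]
    have hMu : M *ᵥ u = w := by
      rw [huw, Matrix.mulVec_mulVec, hMK, Matrix.one_mulVec]
    -- claim: u attains its max at x
    suffices h : u z ≤ u x by simpa [hu] using h
    by_contra hcon
    push_neg at hcon
    obtain ⟨m, -, hm⟩ := Finset.exists_max_image Finset.univ u ⟨x, Finset.mem_univ x⟩
    have hm' : ∀ j, u j ≤ u m := fun j => hm j (Finset.mem_univ j)
    have hmx : m ≠ x := by
      intro h; subst h
      exact absurd (hm' z) (not_le.mpr hcon)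
    have hLnn : 0 ≤ (L *ᵥ u) m := by
      rw [laplacian_mulVec W L hL]
      exact Finset.sum_nonneg fun j _ =>
        mul_nonneg (hW_nonneg m j) (sub_nonneg.mpr (hm' j))
    have hMum : (M *ᵥ u) m ≤ 0 := by
      rw [hMu]
      simp only [hw, hmx, if_false]
      split <;> norm_num
    have hum : u m ≤ 0 := by
      have := hMv u m
      nlinarith
    have hsum : ∑ j, u j = 0 := by
      have hcol : ∀ a : Fin n, ∑ j, K j a = 1 := by
        intro a
        rw [show ∑ j, K j a = ∑ j, K a j from Finset.sum_congr rfl fun j _ => hKsymm j a]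
        exact hrow a
      simp only [hu, Finset.sum_sub_distrib, hcol, sub_self]
    have hall : ∀ j, u j = 0 := by
      intro j
      have h0 : ∀ j ∈ Finset.univ, u j ≤ 0 := fun j _ => le_trans (hm' j) hum
      exact (Finset.sum_eq_zero_iff_of_nonpos h0).mp hsum j (Finset.mem_univ j)
    have : (M *ᵥ u) x = 1 := by
      rw [hMu]; simp [hw, hxy]
    rw [hMv u x] at this
    rw [laplacian_mulVec W L hL] at this
    simp only [hall] at this
    simp at this
  refine ⟨?_, ?_, hrow, hKpd⟩
  · intro x y z
    by_cases hxy : x = y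
    · subst hxy; linarith
    · have h := hmain x y hxy z
      have e1 : K z x = K x z := hKsymm z x
      have e2 : K z y = K y z := hKsymm z y
      linarith
  · intro x y hyx
    set w : Fin n → ℝ := fun j => (if j = x then (1:ℝ) else 0) - (if j = y then 1 else 0) with hw
    have hwne : w ≠ 0 := by
      intro h
      have := congrFun h x
      simp [hw, Ne.symm hyx] at this
    have hpos := hKpd.dotProduct_mulVec_pos hwne
    simp only [star_trivial] at hpos
    have hval : w ⬝ᵥ K *ᵥ w = K x x - K x y - (K y x - K y y) := by
      simp only [dotProduct, hw, sub_mul, one_mul, zero_mul, ite_mul,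
        Finset.sum_sub_distrib, Finset.sum_ite_eq', Finset.mem_univ, if_true]
      have h1 : ∀ a : Fin n, (K *ᵥ w) a = K a x - K a y := by
        intro a
        simp only [Matrix.mulVec, dotProduct, hw, mul_sub, mul_ite, mul_one, mul_zero,
          Finset.sum_sub_distrib, Finset.sum_ite_eq', Finset.mem_univ, if_true]
      rw [h1 x, h1 y]
    rw [hval] at hpos
    have e : K y x = K x y := hKsymm y x
    linarith
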